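/- Let G be a strongly connected digraph with a fixed start vertex s, let (u,v) be a bridge of the flow graph G_s, and let x and y be two vertices dominated by v. If x and y are not strongly connected in the induced subgraph G[D(v)], then every path from x to y in G contains the edge (u,v), or every path from y to x in G contains the edge (u,v). -/

import Mathlib

/-!  Basic notions for finite directed graphs given by an edge set `E : Set (V × V)`. -/

variable {V : Type*}

/-- A path from `u` to `v`: a nonempty list of vertices starting at `u`, ending at `v`,
in which every pair of consecutive vertices is an edge. -/
def IsPath (E : Set (V × V)) (u v : V) (p : List V) : Prop :=
  p.Chain' (fun a b => (a, b) ∈ E) ∧ p.head? = some u ∧ p.getLast? = some v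

/-- `v` is reachable from `u` by a path. -/
def Reach (E : Set (V × V)) (u v : V) : Prop := ∃ p, IsPath E u v p

/-- Every vertex reaches every other vertex. -/
def StronglyConnected (E : Set (V × V)) : Prop := ∀ u v, Reach E u v

/-- An edge `e` is a strong bridge if its removal destroys strong connectivity. -/
def StrongBridge (E : Set (V × V)) (e : V × V) : Prop :=
  e ∈ E ∧ ¬ StronglyConnected (E \ {e})

/-- `u` dominates `v` in the flow graph with start vertex `s`:
every path from `s` to `v` contains `u`. -/
def Dominates (E : Set (V × V)) (s u v : V) : Prop :=
  ∀ p, IsPath E s v p → u ∈ p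

/-- An edge `e = (e.1, e.2)` is a bridge of the flow graph `G_s`:
every path from `s` to `e.2` contains the edge `e`. -/
def FlowBridge (E : Set (V × V)) (s : V) (e : V × V) : Prop :=
  e ∈ E ∧ ∀ p, IsPath E s e.2 p → [e.1, e.2] <:+: p

/-- The reverse digraph: all edges reversed. -/
def rev (E : Set (V × V)) : Set (V × V) := {e | (e.2, e.1) ∈ E}

/-- `D(v)`: the set of vertices dominated by `v` in `G_s`. -/
def Dset (E : Set (V × V)) (s v : V) : Set V := {w | Dominates E s v w}

/-- Reachability inside the induced subgraph `G[S]`: a path all of whose vertices lie in `S`. -/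
def ReachableIn (E : Set (V × V)) (S : Set V) (u v : V) : Prop :=
  ∃ p, IsPath E u v p ∧ ∀ w ∈ p, w ∈ S

/-- `C` is a strongly connected component of the induced subgraph `G[S]`. -/
def SCCIn (E : Set (V × V)) (S : Set V) (C : Set V) : Prop :=
  C.Nonempty ∧ C ⊆ S ∧
  (∀ u ∈ C, ∀ v ∈ C, ReachableIn E S u v) ∧
  (∀ v ∈ S, ∀ u ∈ C, ReachableIn E S u v → ReachableIn E S v u → v ∈ C)

/-- A bridge-dominated component: an SCC of `G[D(v)]` for some bridge `(u,v)` of `G_s`. -/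
def BridgeDomComponent (E : Set (V × V)) (s : V) (C : Set V) : Prop :=
  ∃ u v, FlowBridge E s (u, v) ∧ SCCIn E (Dset E s v) C

/-- The set of edges used by a path `p`. -/
def pathEdges (p : List V) : Set (V × V) := {e | [e.1, e.2] <:+: p}

/-- `u` and `v` are `2`-edge-connected: there are two edge-disjoint paths from `u` to `v`
and two edge-disjoint paths from `v` to `u`. -/
def TwoEdgeConnected (E : Set (V × V)) (u v : V) : Prop :=
  (∃ p q, IsPath E u v p ∧ IsPath E u v q ∧ pathEdges p ∩ pathEdges q = ∅) ∧
  (∃ p q, IsPath E v u p ∧ IsPath E v u q ∧ pathEdges p ∩ pathEdges q = ∅)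

/-- `u` is the immediate dominator of `v` in `G_s`: a proper dominator of `v`
dominated by every proper dominator of `v`. -/
def ImmDom (E : Set (V × V)) (s u v : V) : Prop :=
  Dominates E s u v ∧ u ≠ v ∧
  ∀ w, Dominates E s w v → w ≠ v → Dominates E s w u

/-- `depth v = |Dom(v)|`, the number of dominators of `v` in `G_s`. -/
noncomputable def depth (E : Set (V × V)) (s v : V) : ℕ :=
  {u | Dominates E s u v}.ncard

/-- `z` is the nearest common ancestor of `x` and `y` in the dominator tree of `G_s`:
a common dominator of `x` and `y` dominated by every common dominator. -/
def IsNCA (E : Set (V × V)) (s x y z : V) : Prop :=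
  Dominates E s z x ∧ Dominates E s z y ∧
  ∀ w, Dominates E s w x → Dominates E s w y → Dominates E s w z

/-- `r` is the bridge-decomposition root of `v` in `G_s`: the deepest dominator `r`
of `v` such that `r = s` or `(d(r), r)` is a bridge of `G_s`. -/
def IsBDRoot (E : Set (V × V)) (s v r : V) : Prop :=
  Dominates E s r v ∧
  (r = s ∨ ∃ u, ImmDom E s u r ∧ FlowBridge E s (u, r)) ∧
  ∀ r', Dominates E s r' v →
    (r' = s ∨ ∃ u', ImmDom E s u' r' ∧ FlowBridge E s (u', r')) →
    Dominates E s r' r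

lemma mem_split_first {α : Type*} {v : α} :
    ∀ {b : List α}, v ∈ b → ∃ c d, b = c ++ v :: d ∧ v ∉ c := by
  intro b hb
  induction b with
  | nil => simp at hb
  | cons h t ih =>
    by_cases hvh : v = h
    · exact ⟨[], t, by simp [hvh], by simp⟩
    · have hvt : v ∈ t := by
        rcases List.mem_cons.mp hb with h1 | h1
        · exact absurd h1 hvh
        · exact h1
      obtain ⟨c, d, hcd, hvc⟩ := ih hvt
      exact ⟨h :: c, d, by simp [hcd], by simp [hvh, hvc]⟩

lemma IsPath.append_cons {E : Set (V × V)} {s w y : V} {q b : List V}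
    (h1 : IsPath E s w q) (h2 : IsPath E w y (w :: b)) : IsPath E s y (q ++ b) := by
  obtain ⟨hc1, hh1, hl1⟩ := h1
  obtain ⟨hc2, hh2, hl2⟩ := h2
  have hq : q ≠ [] := by rintro rfl; simp at hh1
  refine ⟨?_, ?_, ?_⟩
  · refine List.isChain_append.mpr ⟨hc1, (List.isChain_cons.mp hc2).2, ?_⟩
    intro a ha c hc
    rw [hl1] at ha
    simp only [Option.mem_def, Option.some.injEq] at ha
    subst ha
    exact (List.isChain_cons.mp hc2).1 c hc
  · rw [List.head?_append, hh1]; rfl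
  · cases b with
    | nil =>
      have hwy : w = y := by simpa using hl2
      simp [hl1, hwy]
    | cons bh bt =>
      rw [List.getLast?_append]
      rw [List.getLast?_cons_cons] at hl2
      rw [hl2]; rfl

/-- Key lemma: a path avoiding edge `(u,v)` ending at a vertex dominated by `v`
stays in `D(v)`. -/
lemma key {E : Set (V × V)} {s u v x y : V}
    (hbr : FlowBridge E s (u, v)) (hy : Dominates E s v y)
    {p : List V} (hp : IsPath E x y p) (hno : ¬ [u, v] <:+: p) :
    ∀ w ∈ p, Dominates E s v w := by
  intro w hw q0 hq0
  by_contra hv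
  obtain ⟨a, b, hab⟩ := List.append_of_mem hw
  -- the suffix w :: b is a path from w to y
  have hsuf : IsPath E w y (w :: b) := by
    refine ⟨hp.1.suffix ⟨a, hab.symm⟩, rfl, ?_⟩
    have := hp.2.2
    rw [hab, List.getLast?_append] at this
    have hne : (w :: b).getLast? = some ((w :: b).getLast (by simp)) :=
      List.getLast?_eq_getLast (by simp)
    rw [hne] at this ⊢
    simpa using this
  -- concatenate q0 with it
  have hcomb : IsPath E s y (q0 ++ b) := hq0.append_cons hsuf
  have hvmem : v ∈ q0 ++ b := hy _ hcomb
  have hvb : v ∈ b := by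
    rcases List.mem_append.mp hvmem with h | h
    · exact absurd h hv
    · exact h
  obtain ⟨c, d, hcd, hvc⟩ := mem_split_first hvb
  -- r = q0 ++ c ++ [v] is a path from s to v
  have hrpre : ((q0 ++ c) ++ [v]) ++ d = q0 ++ b := by
    rw [hcd]; simp
  have hr : IsPath E s v ((q0 ++ c) ++ [v]) := by
    refine ⟨hcomb.1.prefix ⟨d, hrpre⟩, ?_, List.getLast?_concat⟩
    have hq : q0 ≠ [] := by
      rintro rfl; have := hq0.2.1; simp at this
    rw [List.append_assoc, List.head?_append, hq0.2.1]; rfl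
  obtain ⟨t1, t2, ht⟩ := hbr.2 _ hr
  -- t2 must be empty, since v occurs only at the end of r
  have hvnotqc : v ∉ q0 ++ c := by
    simp only [List.mem_append]
    rintro (h | h)
    · exact hv h
    · exact hvc h
  have ht2 : t2 = [] := by
    by_contra ht2
    have : v ∈ ((q0 ++ c) ++ [v]).dropLast := by
      rw [← ht]
      rw [show t1 ++ [u, v] ++ t2 = (t1 ++ [u, v]) ++ t2 by simp]
      rw [List.dropLast_append]
      simp [ht2]
    rw [List.dropLast_concat] at this
    exact hvnotqc this
  subst ht2
  have ht' : (t1 ++ [u]) ++ [v] = (q0 ++ c) ++ [v] := by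
    simpa using ht
  have htu : t1 ++ [u] = q0 ++ c := List.append_cancel_right ht'
  -- now (w :: c) ends with u
  have hwc : (w :: c).getLast? = some u := by
    cases c with
    | nil =>
      simp only [List.append_nil] at htu
      have : q0.getLast? = some u := by
        rw [← htu]; simp [List.getLast?_concat]
      rw [hq0.2.2] at this
      simpa using this
    | cons ch ct =>
      have h1 : (q0 ++ ch :: ct).getLast? = some u := by
        rw [← htu]; simp [List.getLast?_concat]
      rw [List.getLast?_append] at h1
      rw [List.getLast?_cons_cons]
      have h2 : (ch :: ct).getLast? = some ((ch :: ct).getLast (by simp)) :=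
        List.getLast?_eq_getLast (by simp)
      rw [h2] at h1 ⊢
      simpa using h1
  -- so w :: c = e' ++ [u], and p contains [u, v]
  have hwcne : (w :: c) ≠ [] := by simp
  have hwc2 : w :: c = (w :: c).dropLast ++ [u] := by
    have := List.dropLast_append_getLast hwcne
    have hg : (w :: c).getLast hwcne = u := by
      rw [List.getLast?_eq_getLast hwcne] at hwc
      simpa using hwc
    rw [hg] at this
    exact this.symm
  apply hno
  refine ⟨a ++ (w :: c).dropLast, d, ?_⟩
  rw [hab, hcd]
  calc (a ++ (w :: c).dropLast) ++ [u, v] ++ d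
      = a ++ (((w :: c).dropLast ++ [u]) ++ v :: d) := by simp
    _ = a ++ ((w :: c) ++ v :: d) := by rw [← hwc2]
    _ = a ++ w :: (c ++ v :: d) := by simp


/-- if `x, y` are dominated by `v` (with `(u,v)` a bridge of `G_s`)
and not strongly connected in `G[D(v)]`, then all paths from `x` to `y`, or all
paths from `y` to `x`, contain the edge `(u,v)`. -/
theorem stmt4 {V : Type*} (E : Set (V × V)) (s u v x y : V)
    (hSC : StronglyConnected E)
    (hbr : FlowBridge E s (u, v))
    (hx : Dominates E s v x) (hy : Dominates E s v y)
    (hns : ¬ (ReachableIn E (Dset E s v) x y ∧ ReachableIn E (Dset E s v) y x)) :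
    (∀ p, IsPath E x y p → [u, v] <:+: p) ∨
    (∀ p, IsPath E y x p → [u, v] <:+: p) := by
  by_contra h
  push_neg at h
  obtain ⟨⟨p, hp, hnp⟩, ⟨q, hq, hnq⟩⟩ := h
  exact hns ⟨⟨p, hp, fun w hw => key hbr hy hp hnp w hw⟩,
             ⟨q, hq, fun w hw => key hbr hx hq hnq w hw⟩⟩
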